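/- Let s ∈ {1,…,p}, c₀ > 0, and let the Slope weights be λ_j = Aσ√(log(2p/j)/n), j = 1,…,p, for some A, σ > 0. Set s₂ = ⌈s·log(2ep/s)/log 2⌉. If the SRE(s₂,c₀) condition holds, then the WRE(s,c₀) condition holds and ϑ(s,c₀) ≥ θ(s₂,c₀). -/

import Mathlib

open MeasureTheory ProbabilityTheory Real Finset
open scoped ENNReal NNReal BigOperators Classical

noncomputable section

/-- Empirical norm `‖u‖ₙ = √((1/n) ∑ᵢ uᵢ²)`. -/
def normn (n : ℕ) (u : Fin n → ℝ) : ℝ := Real.sqrt ((∑ i, (u i) ^ 2) / n)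

/-- Euclidean (`ℓ₂`) norm on `ℝᵖ`. -/
def l2 (p : ℕ) (u : Fin p → ℝ) : ℝ := Real.sqrt (∑ j, (u j) ^ 2)

/-- `ℓ₁` norm on `ℝᵖ`. -/
def l1 (p : ℕ) (u : Fin p → ℝ) : ℝ := ∑ j, |u j|

/-- Number of nonzero coordinates `‖u‖₀`. -/
def sparsity (p : ℕ) (u : Fin p → ℝ) : ℕ := (Finset.univ.filter fun j => u j ≠ 0).card

/-- Non-increasing rearrangement of `(|u₁|,…,|u_p|)`:
`sharp p u j` is the `(j+1)`-st largest value among the `|u i|` (0-indexed `j`). -/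
def sharp (p : ℕ) (u : Fin p → ℝ) : Fin p → ℝ :=
  fun j => |u ((Tuple.sort fun i => -|u i|) j)|

/-- The SRE constant `θ(s,c₀)`: infimum of `‖Xδ‖ₙ/‖δ‖₂` over the cone
`{δ ≠ 0 : ‖δ‖₁ ≤ (1+c₀)√s ‖δ‖₂}`. -/
def thetaSRE (n p : ℕ) (X : Matrix (Fin n) (Fin p) ℝ) (s : ℕ) (c0 : ℝ) : ℝ :=
  sInf ((fun δ => normn n (X.mulVec δ) / l2 p δ) ''
    {δ : Fin p → ℝ | δ ≠ 0 ∧ l1 p δ ≤ (1 + c0) * Real.sqrt s * l2 p δ})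

/-- The Slope weights `λⱼ = Aσ√(log(2p/j)/n)`, indexed by `j ∈ {1,…,p}`. -/
def slopeWeight (n p : ℕ) (A σ : ℝ) (j : ℕ) : ℝ :=
  A * σ * Real.sqrt (Real.log (2 * p / j) / n)

/-- The sorted `ℓ₁` norm `‖u‖₊ = ∑ⱼ λⱼ u♯ⱼ` associated with weights `lam` (1-indexed). -/
def sortedL1 (p : ℕ) (lam : ℕ → ℝ) (u : Fin p → ℝ) : ℝ :=
  ∑ j : Fin p, lam ((j : ℕ) + 1) * sharp p u j

/-- `b` is a Slope solution with design `X`, weights `lam` and data `y`. -/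
def IsSlopeSol (n p : ℕ) (X : Matrix (Fin n) (Fin p) ℝ) (lam : ℕ → ℝ)
    (y : Fin n → ℝ) (b : Fin p → ℝ) : Prop :=
  ∀ β : Fin p → ℝ,
    normn n (X.mulVec b - y) ^ 2 + 2 * sortedL1 p lam b ≤
      normn n (X.mulVec β - y) ^ 2 + 2 * sortedL1 p lam β

/-- The WRE constant `ϑ(s,c₀)`: infimum of `‖Xδ‖ₙ/‖δ‖₂` over the cone
`{δ ≠ 0 : ‖δ‖₊ ≤ (1+c₀)‖δ‖₂ (∑_{j=1}^s λⱼ²)^{1/2}}`. -/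
def thetaWRE (n p : ℕ) (X : Matrix (Fin n) (Fin p) ℝ) (lam : ℕ → ℝ) (s : ℕ) (c0 : ℝ) : ℝ :=
  sInf ((fun δ => normn n (X.mulVec δ) / l2 p δ) ''
    {δ : Fin p → ℝ | δ ≠ 0 ∧
      sortedL1 p lam δ ≤ (1 + c0) * l2 p δ * Real.sqrt (∑ j ∈ Finset.Icc 1 s, lam j ^ 2)})

/-- sum of the rearranged absolute values is the `ℓ₁` norm. -/
lemma sum_sharp (p : ℕ) (u : Fin p → ℝ) : ∑ j, sharp p u j = l1 p u := by
  unfold sharp l1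
  exact Equiv.sum_comp (Tuple.sort fun i => -|u i|) (fun i => |u i|)

lemma sharp_nonneg (p : ℕ) (u : Fin p → ℝ) (j : Fin p) : 0 ≤ sharp p u j := abs_nonneg _

/-- antitonicity of the Slope weights on `[1, ∞)`. -/
lemma slope_anti {n p : ℕ} (hp : 0 < p) {A σ : ℝ} (hA : 0 ≤ A) (hσ : 0 ≤ σ)
    {i j : ℕ} (hi : 1 ≤ i) (hij : i ≤ j) :
    slopeWeight n p A σ j ≤ slopeWeight n p A σ i := by
  unfold slopeWeight
  have h1 : (0:ℝ) < 2 * p / j := by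
    apply div_pos (by positivity) (by exact_mod_cast Nat.lt_of_lt_of_le hi hij)
  have h2 : (2:ℝ) * p / j ≤ 2 * p / i := by
    apply div_le_div_of_nonneg_left (by positivity) (by exact_mod_cast hi) (by exact_mod_cast hij)
  have := Real.log_le_log h1 h2
  gcongr

lemma slope_nonneg (n p : ℕ) {A σ : ℝ} (hA : 0 ≤ A) (hσ : 0 ≤ σ) (j : ℕ) :
    0 ≤ slopeWeight n p A σ j := by
  unfold slopeWeight; positivity

/-- `∑_{j=1}^s log j ≥ s log s − s`. -/
lemma log_factorial_lb (s : ℕ) :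
    (s:ℝ) * Real.log s - s ≤ ∑ j ∈ Finset.Icc 1 s, Real.log j := by
  induction s with
  | zero => simp
  | succ k ih =>
    rw [Finset.sum_Icc_succ_top (by omega)]
    have key : (k:ℝ) * Real.log (k+1) - (k:ℝ) * Real.log k ≤ 1 := by
      rcases Nat.eq_zero_or_pos k with hk | hk
      · subst hk; simp
      · have hk' : (0:ℝ) < k := by exact_mod_cast hk
        have h1 : Real.log ((k:ℝ)+1) - Real.log k = Real.log (1 + 1/(k:ℝ)) := by
          rw [← Real.log_div (by positivity) (ne_of_gt hk')]
          congr 1; field_simp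
        have h2 : Real.log (1 + 1/(k:ℝ)) ≤ 1/(k:ℝ) := by
          have := Real.log_le_sub_one_of_pos (show (0:ℝ) < 1 + 1/(k:ℝ) by positivity)
          linarith
        have : (k:ℝ) * (Real.log ((k:ℝ)+1) - Real.log k) ≤ (k:ℝ) * (1/(k:ℝ)) := by
          apply mul_le_mul_of_nonneg_left _ (le_of_lt hk')
          rw [h1]; exact h2
        rw [mul_one_div, div_self (ne_of_gt hk')] at this
        nlinarith
    push_cast
    nlinarith

/-- Proposition 6: with the Slope weights `λⱼ = Aσ√(log(2p/j)/n)` and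
`s₂ = ⌈s log(2ep/s)/log 2⌉`, the condition `SRE(s₂,c₀)` implies `WRE(s,c₀)` and
`ϑ(s,c₀) ≥ θ(s₂,c₀)`. -/
theorem sre_implies_wre
    {n p : ℕ} (hn : 0 < n) (hp : 0 < p)
    (X : Matrix (Fin n) (Fin p) ℝ)
    (s : ℕ) (hs1 : 1 ≤ s) (hsp : s ≤ p) (c0 : ℝ) (hc0 : 0 < c0)
    (A σ : ℝ) (hA : 0 < A) (hσ : 0 < σ)
    (s2 : ℕ) (hs2 : s2 = ⌈(s : ℝ) * Real.log (2 * Real.exp 1 * p / s) / Real.log 2⌉₊)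
    (hcol : ∀ j, normn n (X.mulVec (Pi.single j 1)) ≤ 1)
    (hSRE : 0 < thetaSRE n p X s2 c0) :
    0 < thetaWRE n p X (slopeWeight n p A σ) s c0 ∧
      thetaSRE n p X s2 c0 ≤ thetaWRE n p X (slopeWeight n p A σ) s c0 := by
  set lam := slopeWeight n p A σ with hlam
  have hs0 : (0:ℝ) < s := by exact_mod_cast hs1
  have hp0 : (0:ℝ) < p := by exact_mod_cast hp
  have hn0 : (0:ℝ) < n := by exact_mod_cast hn
  -- λ_p value and positivity
  have hlamp : lam p = A * σ * Real.sqrt (Real.log 2 / n) := by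
    simp only [hlam, slopeWeight]
    congr 3
    rw [mul_div_assoc, div_self (ne_of_gt hp0), mul_one]
  have hlamp_pos : 0 < lam p := by
    rw [hlamp]
    have h2 : (0:ℝ) < Real.log 2 := Real.log_pos (by norm_num)
    positivity
  -- ∑_{j=1}^s log(2p/j) ≤ s log(2ep/s)
  have hlogsum : ∑ j ∈ Finset.Icc 1 s, Real.log (2 * p / j)
      ≤ (s:ℝ) * Real.log (2 * Real.exp 1 * p / s) := by
    have h1 : ∀ j ∈ Finset.Icc 1 s, Real.log (2 * (p:ℝ) / j)
        = Real.log (2 * p) - Real.log j := by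
      intro j hj
      simp only [Finset.mem_Icc] at hj
      have : (0:ℝ) < j := by exact_mod_cast hj.1
      rw [Real.log_div (by positivity) (ne_of_gt this)]
    rw [Finset.sum_congr rfl h1, Finset.sum_sub_distrib, Finset.sum_const, Nat.card_Icc]
    have h2 : (s:ℝ) * Real.log (2 * Real.exp 1 * p / s)
        = (s:ℝ) * Real.log (2 * p) + s - s * Real.log s := by
      rw [show (2:ℝ) * Real.exp 1 * p / s = (2 * p / s) * Real.exp 1 by ring,
        Real.log_mul (by positivity) (Real.exp_ne_zero 1), Real.log_exp,
        Real.log_div (by positivity) (ne_of_gt hs0)]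
      ring
    have h3 := log_factorial_lb s
    rw [h2]
    simp only [Nat.add_sub_cancel, nsmul_eq_mul]
    linarith
  -- ∑_{j=1}^s λ_j² ≤ λ_p² * s₂
  have hsumlam : ∑ j ∈ Finset.Icc 1 s, lam j ^ 2 ≤ lam p ^ 2 * s2 := by
    have h1 : ∀ j ∈ Finset.Icc 1 s, lam j ^ 2 = (A*σ)^2 * (Real.log (2*p/j) / n) := by
      intro j hj
      simp only [Finset.mem_Icc] at hj
      have hj1 : (1:ℝ) ≤ j := by exact_mod_cast hj.1
      have hjp : (j:ℝ) ≤ p := by exact_mod_cast le_trans hj.2 hsp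
      have hlog : 0 ≤ Real.log (2 * (p:ℝ) / j) := by
        apply Real.log_nonneg
        rw [le_div_iff₀ (by linarith)]
        linarith
      simp only [hlam, slopeWeight, mul_pow]
      rw [Real.sq_sqrt (by positivity)]
    rw [Finset.sum_congr rfl h1, ← Finset.mul_sum]
    have h2 : (s:ℝ) * Real.log (2 * Real.exp 1 * p / s) ≤ s2 * Real.log 2 := by
      have hlog2 : (0:ℝ) < Real.log 2 := Real.log_pos (by norm_num)
      have := Nat.le_ceil ((s : ℝ) * Real.log (2 * Real.exp 1 * p / s) / Real.log 2)
      rw [← hs2] at this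
      calc (s:ℝ) * Real.log (2 * Real.exp 1 * p / s)
          = ((s:ℝ) * Real.log (2 * Real.exp 1 * p / s) / Real.log 2) * Real.log 2 := by
            field_simp
        _ ≤ s2 * Real.log 2 := by
            apply mul_le_mul_of_nonneg_right this (le_of_lt hlog2)
    have h3 : ∑ j ∈ Finset.Icc 1 s, (Real.log (2*(p:ℝ)/j) / n) ≤ (s2 * Real.log 2) / n := by
      rw [← Finset.sum_div]
      gcongr
      exact le_trans hlogsum h2
    calc (A*σ)^2 * ∑ j ∈ Finset.Icc 1 s, (Real.log (2*(p:ℝ)/j) / n)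
        ≤ (A*σ)^2 * ((s2 * Real.log 2) / n) := by
          apply mul_le_mul_of_nonneg_left h3 (by positivity)
      _ = lam p ^ 2 * s2 := by
          have hl2 : (0:ℝ) ≤ Real.log 2 / n := by
            have : (0:ℝ) ≤ Real.log 2 := le_of_lt (Real.log_pos (by norm_num))
            positivity
          rw [hlamp, mul_pow, mul_pow, Real.sq_sqrt hl2]
          ring
  -- √(∑ λ_j²) ≤ λ_p √s₂
  have hsqrt : Real.sqrt (∑ j ∈ Finset.Icc 1 s, lam j ^ 2) ≤ lam p * Real.sqrt s2 := by
    calc Real.sqrt (∑ j ∈ Finset.Icc 1 s, lam j ^ 2)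
        ≤ Real.sqrt (lam p ^ 2 * s2) := Real.sqrt_le_sqrt hsumlam
      _ = lam p * Real.sqrt s2 := by
          rw [Real.sqrt_mul (by positivity), Real.sqrt_sq (le_of_lt hlamp_pos)]
  -- cone inclusion
  have hsubset : {δ : Fin p → ℝ | δ ≠ 0 ∧
      sortedL1 p lam δ ≤ (1 + c0) * l2 p δ * Real.sqrt (∑ j ∈ Finset.Icc 1 s, lam j ^ 2)}
      ⊆ {δ : Fin p → ℝ | δ ≠ 0 ∧ l1 p δ ≤ (1 + c0) * Real.sqrt s2 * l2 p δ} := by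
    rintro δ ⟨hδ0, hδ⟩
    refine ⟨hδ0, ?_⟩
    have hl2 : 0 ≤ l2 p δ := Real.sqrt_nonneg _
    have key : lam p * l1 p δ ≤ sortedL1 p lam δ := by
      rw [← sum_sharp p δ, Finset.mul_sum]
      apply Finset.sum_le_sum
      intro j _
      apply mul_le_mul_of_nonneg_right _ (sharp_nonneg p δ j)
      exact slope_anti hp (le_of_lt hA) (le_of_lt hσ) (Nat.one_le_iff_ne_zero.mpr (by omega))
        (by omega : (j:ℕ) + 1 ≤ p)
    have h2 : sortedL1 p lam δ ≤ (1 + c0) * l2 p δ * (lam p * Real.sqrt s2) := by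
      refine le_trans hδ ?_
      apply mul_le_mul_of_nonneg_left hsqrt (by positivity)
    have h3 : lam p * l1 p δ ≤ lam p * ((1 + c0) * Real.sqrt s2 * l2 p δ) := by
      calc lam p * l1 p δ ≤ (1 + c0) * l2 p δ * (lam p * Real.sqrt s2) :=
            le_trans key h2
        _ = lam p * ((1 + c0) * Real.sqrt s2 * l2 p δ) := by ring
    exact (mul_le_mul_iff_right₀ hlamp_pos).mp h3
  -- the WRE cone is nonempty: witness Pi.single 0 1
  set δ₀ : Fin p → ℝ := Pi.single ⟨0, hp⟩ 1 with hδ₀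
  have hδ₀ne : δ₀ ≠ 0 := by
    intro h
    have := congrFun h ⟨0, hp⟩
    simp [hδ₀] at this
  have habs : ∀ j : Fin p, |δ₀ j| = if j = ⟨0, hp⟩ then 1 else 0 := by
    intro j
    by_cases h : j = ⟨0, hp⟩ <;> simp [hδ₀, Pi.single_apply, h]
  have hl1δ₀ : l1 p δ₀ = 1 := by
    unfold l1
    rw [Finset.sum_congr rfl (fun j _ => habs j)]
    simp
  have hl2δ₀ : l2 p δ₀ = 1 := by
    unfold l2
    have : ∀ j : Fin p, (δ₀ j)^2 = if j = ⟨0, hp⟩ then 1 else 0 := by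
      intro j
      by_cases h : j = ⟨0, hp⟩ <;> simp [hδ₀, Pi.single_apply, h]
    rw [Finset.sum_congr rfl (fun j _ => this j)]
    simp
  have hlam1_le : lam 1 ≤ Real.sqrt (∑ j ∈ Finset.Icc 1 s, lam j ^ 2) := by
    have h1 : lam 1 ^ 2 ≤ ∑ j ∈ Finset.Icc 1 s, lam j ^ 2 := by
      apply Finset.single_le_sum (f := fun j => lam j ^ 2)
        (fun j _ => sq_nonneg _) (Finset.mem_Icc.mpr ⟨le_refl 1, hs1⟩)
    calc lam 1 = Real.sqrt (lam 1 ^ 2) :=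
          (Real.sqrt_sq (slope_nonneg n p (le_of_lt hA) (le_of_lt hσ) 1)).symm
      _ ≤ _ := Real.sqrt_le_sqrt h1
  have hδ₀mem : δ₀ ∈ {δ : Fin p → ℝ | δ ≠ 0 ∧
      sortedL1 p lam δ ≤ (1 + c0) * l2 p δ * Real.sqrt (∑ j ∈ Finset.Icc 1 s, lam j ^ 2)} := by
    refine ⟨hδ₀ne, ?_⟩
    have hsorted : sortedL1 p lam δ₀ ≤ lam 1 := by
      unfold sortedL1
      calc ∑ j : Fin p, lam ((j:ℕ)+1) * sharp p δ₀ j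
          ≤ ∑ j : Fin p, lam 1 * sharp p δ₀ j := by
            apply Finset.sum_le_sum
            intro j _
            apply mul_le_mul_of_nonneg_right _ (sharp_nonneg p δ₀ j)
            exact slope_anti hp (le_of_lt hA) (le_of_lt hσ) le_rfl (by omega)
        _ = lam 1 * l1 p δ₀ := by rw [← Finset.mul_sum, sum_sharp]
        _ = lam 1 := by rw [hl1δ₀, mul_one]
    rw [hl2δ₀, mul_one]
    calc sortedL1 p lam δ₀ ≤ lam 1 := hsorted
      _ ≤ Real.sqrt (∑ j ∈ Finset.Icc 1 s, lam j ^ 2) := hlam1_le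
      _ ≤ (1 + c0) * Real.sqrt (∑ j ∈ Finset.Icc 1 s, lam j ^ 2) := by
          nlinarith [Real.sqrt_nonneg (∑ j ∈ Finset.Icc 1 s, lam j ^ 2)]
  -- bddBelow of SRE image
  have hbdd : BddBelow ((fun δ => normn n (X.mulVec δ) / l2 p δ) ''
      {δ : Fin p → ℝ | δ ≠ 0 ∧ l1 p δ ≤ (1 + c0) * Real.sqrt s2 * l2 p δ}) := by
    refine ⟨0, ?_⟩
    rintro x ⟨δ, _, rfl⟩
    exact div_nonneg (Real.sqrt_nonneg _) (Real.sqrt_nonneg _)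
  have hle : thetaSRE n p X s2 c0 ≤ thetaWRE n p X lam s c0 := by
    apply csInf_le_csInf hbdd
    · exact ⟨_, Set.mem_image_of_mem _ hδ₀mem⟩
    · exact Set.image_mono hsubset
  exact ⟨lt_of_lt_of_le hSRE hle, hle⟩
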